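/- Let f be a partial injective function on Fin n with domain D and range R (equivalently, a matching of a bipartite graph on Fin n ⊔ Fin n). Then Fin n decomposes into: (i) the set C of elements lying on f-cycles (elements i such that iterating f starting at i returns to i), on which f restricts to a permutation; (ii) p maximal f-chains, each a sequence a = v_0, f(v_0)=v_1, ..., v_ℓ = b with ℓ ≥ 1, a ∉ R, and b ∉ D; and (iii) a set of u isolated elements belonging to neither D nor R. Moreover |(Fin n \ D) ∪ (Fin n \ R)| = 2p + u. -/

import Mathlib

open Function

section AuxStmt9

variable {n : ℕ}

open Classical in
noncomputable def exitN (D : Finset (Fin n)) (f : Fin n → Fin n) (a : Fin n) : ℕ :=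
  if h : ∃ k, f^[k] a ∉ D then Nat.find h else 0

noncomputable def chainOf (D : Finset (Fin n)) (f : Fin n → Fin n) (a : Fin n) : List (Fin n) :=
  (List.range (exitN D f a + 1)).map (fun k => f^[k] a)

variable {D : Finset (Fin n)} {f : Fin n → Fin n}

open Classical in
lemma exitN_spec {a : Fin n} (h : ∃ k, f^[k] a ∉ D) : f^[exitN D f a] a ∉ D := by
  rw [exitN, dif_pos h]
  exact Nat.find_spec h

open Classical in
lemma exitN_min {a : Fin n} {i : ℕ} (hi : i < exitN D f a) : f^[i] a ∈ D := by
  by_cases h : ∃ k, f^[k] a ∉ D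
  · rw [exitN, dif_pos h] at hi
    have := Nat.find_min h hi
    simpa using this
  · rw [exitN, dif_neg h] at hi; omega

lemma le_exitN {a : Fin n} {k : ℕ} (h : ∃ k, f^[k] a ∉ D)
    (hall : ∀ i < k, f^[i] a ∈ D) : k ≤ exitN D f a := by
  by_contra hlt
  exact exitN_spec h (hall _ (by omega))

lemma exitN_pos {a : Fin n} (haD : a ∈ D) (h : ∃ k, f^[k] a ∉ D) : 1 ≤ exitN D f a :=
  le_exitN h (by intro i hi; interval_cases i; simpa)

lemma mem_chainOf {a v : Fin n} :
    v ∈ chainOf D f a ↔ ∃ k, k ≤ exitN D f a ∧ f^[k] a = v := by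
  simp only [chainOf, List.mem_map, List.mem_range, Nat.lt_succ_iff]

lemma head_chainOf {a : Fin n} : (chainOf D f a).head? = some a := by
  rw [chainOf, List.range_succ_eq_map]
  simp

lemma getLast_chainOf {a : Fin n} :
    (chainOf D f a).getLast? = some (f^[exitN D f a] a) := by
  rw [chainOf, List.range_succ, List.map_append, List.map_singleton,
    ← List.concat_eq_append]
  simp [List.getLast?_concat]

lemma cancelIter (hinj : Set.InjOn f (D : Set (Fin n))) :
    ∀ (j : ℕ) (x y : Fin n), (∀ i < j, f^[i] x ∈ D) → (∀ i < j, f^[i] y ∈ D) →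
      f^[j] x = f^[j] y → x = y := by
  intro j
  induction j with
  | zero => intro x y _ _ h; simpa using h
  | succ j ih =>
    intro x y hx hy h
    rw [Function.iterate_succ_apply', Function.iterate_succ_apply'] at h
    refine ih x y (fun i hi => hx i (by omega)) (fun i hi => hy i (by omega)) ?_
    exact hinj (Finset.mem_coe.mpr (hx j (by omega))) (Finset.mem_coe.mpr (hy j (by omega))) h

lemma distinctIter (hinj : Set.InjOn f (D : Set (Fin n))) {a : Fin n}
    (ha : a ∉ D.image f) :
    ∀ j k, j ≤ k → (∀ i < k, f^[i] a ∈ D) → f^[j] a = f^[k] a → j = k := by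
  intro j k hjk hD h
  by_contra hne
  have hlt : j < k := lt_of_le_of_ne hjk hne
  have hk : f^[k] a = f^[j] (f^[k - j] a) := by
    rw [← Function.iterate_add_apply]
    congr 1
    omega
  have heq : a = f^[k - j] a := by
    refine cancelIter hinj j a (f^[k - j] a) (fun i hi => hD i (by omega)) ?_ (h.trans hk)
    intro i hi
    rw [← Function.iterate_add_apply]
    exact hD _ (by omega)
  apply ha
  refine Finset.mem_image.mpr ⟨f^[k - j - 1] a, hD _ (by omega), ?_⟩
  have h2 : f^[k - j] a = f (f^[k - j - 1] a) := by
    have h3 := Function.iterate_succ_apply' f (k - j - 1) a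
    rw [show (k - j - 1).succ = k - j from by omega] at h3
    exact h3
  rw [← h2]
  exact heq.symm

lemma cycleAll {x : Fin n} {p : ℕ} (hp : 0 < p) (hcyc : f^[p] x = x)
    (hD : ∀ i < p, f^[i] x ∈ D) : ∀ k, f^[k] x ∈ D := by
  intro k
  induction k using Nat.strong_induction_on with
  | _ k ih =>
    by_cases h : k < p
    · exact hD k h
    · have he : f^[k] x = f^[k - p] x := by
        conv_lhs => rw [show k = (k - p) + p by omega]
        rw [Function.iterate_add_apply, hcyc]
      rw [he]
      exact ih (k - p) (by omega)

end AuxStmt9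


theorem stmt9 {n : ℕ} (D : Finset (Fin n)) (f : Fin n → Fin n)
    (hinj : Set.InjOn f (D : Set (Fin n))) :
    ∃ (C : Finset (Fin n)) (chains : Finset (List (Fin n))) (Iso : Finset (Fin n)),
      -- (i) C is the set of elements lying on f-cycles, and f restricts to a
      -- permutation of C
      (∀ i ∈ C, i ∈ D ∧ f i ∈ C) ∧
      (∀ i ∈ C, ∃ m : ℕ, 0 < m ∧ f^[m] i = i) ∧
      (∀ j ∈ C, ∃ i ∈ C, f i = j) ∧
      -- (ii) each chain is a maximal orbit segment a = v₀, f v₀, ..., v_ℓ = b with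
      -- ℓ ≥ 1, starting outside the range and ending outside the domain
      (∀ c ∈ chains, c.Nodup ∧ 2 ≤ c.length ∧
        c.Chain' (fun a b => a ∈ D ∧ f a = b) ∧
        (∀ a, c.head? = some a → a ∉ D.image f) ∧
        (∀ b, c.getLast? = some b → b ∉ D)) ∧
      -- (iii) isolated elements belong to neither the domain nor the range
      (∀ v ∈ Iso, v ∉ D ∧ v ∉ D.image f) ∧
      -- the three parts are pairwise disjoint and cover Fin n
      (∀ c ∈ chains, ∀ v : Fin n, v ∈ c → v ∉ C ∧ v ∉ Iso) ∧
      (∀ v ∈ C, v ∉ Iso) ∧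
      (∀ c ∈ chains, ∀ c' ∈ chains, c ≠ c' → ∀ v : Fin n, v ∈ c → v ∉ c') ∧
      (∀ v : Fin n, v ∈ C ∨ v ∈ Iso ∨ ∃ c ∈ chains, v ∈ c) ∧
      -- counting: |(Fin n \ D) ∪ (Fin n \ R)| = 2p + u
      ((Finset.univ \ D) ∪ (Finset.univ \ D.image f)).card =
        2 * chains.card + Iso.card := by
  classical
  set R := D.image f with hR
  set C : Finset (Fin n) := Finset.univ.filter (fun i => ∀ k, f^[k] i ∈ D) with hC
  set Iso : Finset (Fin n) := Finset.univ.filter (fun v => v ∉ D ∧ v ∉ R) with hIso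
  set S : Finset (Fin n) := D \ R with hS
  set chains : Finset (List (Fin n)) := S.image (chainOf D f) with hchains
  have hmemC : ∀ i, i ∈ C ↔ ∀ k, f^[k] i ∈ D := by
    intro i; simp [hC]
  have hmemIso : ∀ v, v ∈ Iso ↔ v ∉ D ∧ v ∉ R := by
    intro v; simp [hIso]
  have hmemS : ∀ a, a ∈ S ↔ a ∈ D ∧ a ∉ R := by
    intro a; simp [hS]
  have hex : ∀ a ∈ S, ∃ k, f^[k] a ∉ D := by
    intro a ha
    rw [hmemS] at ha
    by_contra hcon
    push_neg at hcon
    obtain ⟨x, y, hxy, he⟩ := Finite.exists_ne_map_eq_of_infinite (fun k : ℕ => f^[k] a)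
    rcases le_total x y with hle | hle
    · exact hxy (distinctIter hinj ha.2 x y hle (fun i _ => hcon i) he)
    · exact hxy (distinctIter hinj ha.2 y x hle (fun i _ => hcon i) he.symm).symm
  -- key uniqueness for chain elements
  have key : ∀ a ∈ S, ∀ a' ∈ S, ∀ k k', k ≤ exitN D f a → k' ≤ exitN D f a' →
      k ≤ k' → f^[k] a = f^[k'] a' → a = a' ∧ k = k' := by
    intro a ha a' ha' k k' hk hk' hkk' heq
    have haa : a = f^[k' - k] a' := by
      refine cancelIter hinj k a (f^[k' - k] a') (fun i hi => exitN_min (by omega)) ?_ ?_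
      · intro i hi
        rw [← Function.iterate_add_apply]
        exact exitN_min (by omega)
      · rw [← Function.iterate_add_apply]
        rw [show k + (k' - k) = k' from by omega]
        exact heq
    by_cases hkeq : k = k'
    · refine ⟨?_, hkeq⟩
      rw [show k' - k = 0 from by omega] at haa
      simpa using haa
    · exfalso
      have hlt : k < k' := by omega
      have : a ∈ R := by
        rw [hR]
        refine Finset.mem_image.mpr ⟨f^[k' - k - 1] a', exitN_min (by omega), ?_⟩
        have h3 := Function.iterate_succ_apply' f (k' - k - 1) a'
        rw [show (k' - k - 1).succ = k' - k from by omega] at h3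
        rw [← h3]
        exact haa.symm
      exact ((hmemS a).mp ha).2 this
  refine ⟨C, chains, Iso, ?_, ?_, ?_, ?_, ?_, ?_, ?_, ?_, ?_, ?_⟩
  -- (1)
  · intro i hi
    rw [hmemC] at hi
    refine ⟨by simpa using hi 0, ?_⟩
    rw [hmemC]
    intro k
    have := hi (k + 1)
    rwa [Function.iterate_succ_apply] at this
  -- (2)
  · intro i hi
    rw [hmemC] at hi
    obtain ⟨x, y, hxy, he⟩ := Finite.exists_ne_map_eq_of_infinite (fun k : ℕ => f^[k] i)
    have main : ∀ x y : ℕ, x < y → f^[x] i = f^[y] i → ∃ m, 0 < m ∧ f^[m] i = i := by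
      intro x y hlt he
      refine ⟨y - x, by omega, ?_⟩
      have : i = f^[y - x] i := by
        refine cancelIter hinj x i (f^[y - x] i) (fun _ _ => hi _) ?_ ?_
        · intro j hj
          rw [← Function.iterate_add_apply]
          exact hi _
        · rw [← Function.iterate_add_apply, show x + (y - x) = y from by omega]
          exact he
      exact this.symm
    rcases lt_or_gt_of_ne hxy with h | h
    · exact main x y h he
    · exact main y x h he.symm
  -- (3)
  · intro j hj
    have hj' := hj
    rw [hmemC] at hj'
    obtain ⟨x, y, hxy, he⟩ := Finite.exists_ne_map_eq_of_infinite (fun k : ℕ => f^[k] j)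
    have main : ∀ x y : ℕ, x < y → f^[x] j = f^[y] j → ∃ i ∈ C, f i = j := by
      intro x y hlt he
      have hcyc : f^[y - x] j = j := by
        have : j = f^[y - x] j := by
          refine cancelIter hinj x j (f^[y - x] j) (fun _ _ => hj' _) ?_ ?_
          · intro t ht
            rw [← Function.iterate_add_apply]
            exact hj' _
          · rw [← Function.iterate_add_apply, show x + (y - x) = y from by omega]
            exact he
        exact this.symm
      refine ⟨f^[y - x - 1] j, ?_, ?_⟩
      · rw [hmemC]
        intro k
        rw [← Function.iterate_add_apply]
        exact hj' _
      · have h3 := Function.iterate_succ_apply' f (y - x - 1) j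
        rw [show (y - x - 1).succ = y - x from by omega] at h3
        rw [← h3]
        exact hcyc
    rcases lt_or_gt_of_ne hxy with h | h
    · exact main x y h he
    · exact main y x h he.symm
  -- (4) chain structure
  · intro c hc
    obtain ⟨a, ha, rfl⟩ := Finset.mem_image.mp hc
    have h := hex a ha
    have haD := ((hmemS a).mp ha).1
    have haR := ((hmemS a).mp ha).2
    have hN1 := exitN_pos haD h
    refine ⟨?_, ?_, ?_, ?_, ?_⟩
    · rw [chainOf]
      refine List.Nodup.map_on ?_ List.nodup_range
      intro x hx y hy hxy
      rw [List.mem_range, Nat.lt_succ_iff] at hx hy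
      rcases le_total x y with hle | hle
      · exact distinctIter hinj haR x y hle (fun i hi => exitN_min (by omega)) hxy
      · exact (distinctIter hinj haR y x hle (fun i hi => exitN_min (by omega)) hxy.symm).symm
    · rw [chainOf]
      simpa using hN1
    · rw [chainOf, List.Chain', List.isChain_map, List.isChain_range_succ]
      intro m hm
      exact ⟨exitN_min hm, (Function.iterate_succ_apply' f m a).symm⟩
    · intro x hx
      rw [head_chainOf] at hx
      injection hx with hx
      rwa [hx] at haR
    · intro b hb
      rw [getLast_chainOf] at hb
      injection hb with hb
      rw [← hb]
      exact exitN_spec h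
  -- (5)
  · intro v hv
    exact (hmemIso v).mp hv
  -- (6) chains disjoint from C and Iso
  · intro c hc v hv
    obtain ⟨a, ha, rfl⟩ := Finset.mem_image.mp hc
    have h := hex a ha
    have haD := ((hmemS a).mp ha).1
    have hN1 := exitN_pos haD h
    obtain ⟨k, hk, rfl⟩ := mem_chainOf.mp hv
    constructor
    · intro hCmem
      rw [hmemC] at hCmem
      have := hCmem (exitN D f a - k)
      rw [← Function.iterate_add_apply, show exitN D f a - k + k = exitN D f a from by omega] at this
      exact exitN_spec h this
    · intro hImem
      rw [hmemIso] at hImem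
      rcases eq_or_lt_of_le hk with heq | hlt
      · apply hImem.2
        rw [hR]
        refine Finset.mem_image.mpr ⟨f^[k - 1] a, exitN_min (by omega), ?_⟩
        have h3 := Function.iterate_succ_apply' f (k - 1) a
        rw [show (k - 1).succ = k from by omega] at h3
        exact h3.symm
      · exact hImem.1 (exitN_min hlt)
  -- (7)
  · intro v hv hvI
    rw [hmemC] at hv
    rw [hmemIso] at hvI
    exact hvI.1 (by simpa using hv 0)
  -- (8) distinct chains disjoint
  · intro c hc c' hc' hne v hv hv'
    obtain ⟨a, ha, rfl⟩ := Finset.mem_image.mp hc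
    obtain ⟨a', ha', rfl⟩ := Finset.mem_image.mp hc'
    obtain ⟨k, hk, hkv⟩ := mem_chainOf.mp hv
    obtain ⟨k', hk', hkv'⟩ := mem_chainOf.mp hv'
    have heq : f^[k] a = f^[k'] a' := by rw [hkv, hkv']
    rcases le_total k k' with hle | hle
    · obtain ⟨haa, -⟩ := key a ha a' ha' k k' hk hk' hle heq
      exact hne (by rw [haa])
    · obtain ⟨haa, -⟩ := key a' ha' a ha k' k hk' hk hle heq.symm
      exact hne (by rw [haa])
  -- (9) coverage
  · intro v
    by_cases hvC : v ∈ C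
    · exact Or.inl hvC
    by_cases hvI : v ∈ Iso
    · exact Or.inr (Or.inl hvI)
    refine Or.inr (Or.inr ?_)
    have hvDR : v ∈ D ∨ v ∈ R := by
      rw [hmemIso] at hvI
      push_neg at hvI
      by_cases h1 : v ∈ D
      · exact Or.inl h1
      · exact Or.inr (hvI h1)
    set P : ℕ → Prop := fun j => ∃ w, f^[j] w = v ∧ ∀ i < j, f^[i] w ∈ D with hP
    have hP0 : P 0 := ⟨v, by simp, by omega⟩
    have hbound : ∀ j, P j → j < n := by
      intro j hj
      obtain ⟨w, hw, hwD⟩ := hj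
      have hinj2 : ∀ x ≤ j, ∀ y ≤ j, f^[x] w = f^[y] w → x = y := by
        have main : ∀ x y : ℕ, x ≤ y → y ≤ j → f^[x] w = f^[y] w → x = y := by
          intro x y hxy hyj he
          by_contra hne
          have hlt : x < y := by omega
          have hww : w = f^[y - x] w := by
            refine cancelIter hinj x w (f^[y - x] w) (fun i hi => hwD i (by omega)) ?_ ?_
            · intro i hi
              rw [← Function.iterate_add_apply]
              exact hwD _ (by omega)
            · rw [← Function.iterate_add_apply, show x + (y - x) = y from by omega]
              exact he
          have hall : ∀ k, f^[k] w ∈ D :=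
            cycleAll (p := y - x) (by omega) hww.symm (fun i hi => hwD i (by omega))
          apply hvC
          rw [hmemC]
          intro k
          rw [← hw, ← Function.iterate_add_apply]
          exact hall _
        intro x hx y hy he
        rcases le_total x y with hle | hle
        · exact main x y hle hy he
        · exact (main y x hle hx he.symm).symm
      have hfininj : Function.Injective (fun i : Fin (j + 1) => f^[(i : ℕ)] w) := by
        intro x y hxy
        have := hinj2 x (by omega) y (by omega) hxy
        exact Fin.ext this
      have := Fintype.card_le_of_injective _ hfininj
      simpa using this
    set m : ℕ := Nat.findGreatest P n with hm
    have hPm : P m := Nat.findGreatest_spec (Nat.zero_le n) hP0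
    have hnot : ¬ P (m + 1) := by
      intro hcon
      exact Nat.findGreatest_is_greatest (Nat.lt_succ_self m) (le_of_lt (hbound _ hcon)) hcon
    obtain ⟨w, hw, hwD⟩ := hPm
    have hwR : w ∉ R := by
      intro hmem
      obtain ⟨w', hw'D, hw'⟩ := Finset.mem_image.mp hmem
      apply hnot
      refine ⟨w', ?_, ?_⟩
      · rw [Function.iterate_succ_apply, hw']
        exact hw
      · intro i hi
        match i with
        | 0 => simpa using hw'D
        | (i' + 1) =>
          rw [Function.iterate_succ_apply, hw']
          exact hwD _ (by omega)
    have hwDmem : w ∈ D := by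
      rcases Nat.eq_zero_or_pos m with h0 | hpos
      · rw [h0] at hw
        have hwv : w = v := by simpa using hw
        subst hwv
        rcases hvDR with h | h
        · exact h
        · exact absurd h hwR
      · exact by simpa using hwD 0 hpos
    have hwS : w ∈ S := (hmemS w).mpr ⟨hwDmem, hwR⟩
    refine ⟨chainOf D f w, Finset.mem_image.mpr ⟨w, hwS, rfl⟩, ?_⟩
    rw [mem_chainOf]
    exact ⟨m, le_exitN (hex w hwS) hwD, hw⟩
  -- (10) counting
  · have hcardchains : chains.card = S.card := by
      rw [hchains]
      apply Finset.card_image_of_injOn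
      intro a ha a' ha' hcc
      have h1 : (chainOf D f a).head? = (chainOf D f a').head? := by rw [hcc]
      rw [head_chainOf, head_chainOf] at h1
      injection h1
    have hIsoEq : Iso = Finset.univ \ (D ∪ R) := by
      ext v
      simp [hIso]
    have hLHS : Finset.univ \ D ∪ (Finset.univ \ R) = Finset.univ \ (D ∩ R) := by
      ext v
      simp
      tauto
    have e1 : (D ∩ R).card + S.card = D.card := by
      rw [hS]
      exact Finset.card_inter_add_card_sdiff D R
    have e2 : (D ∪ R).card + (D ∩ R).card = D.card + R.card :=
      Finset.card_union_add_card_inter D R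
    have e3 : R.card = D.card := Finset.card_image_of_injOn hinj
    have e4 : (D ∪ R).card ≤ n := by
      have := Finset.card_le_card (Finset.subset_univ (D ∪ R))
      simpa using this
    have e5 : (Finset.univ \ (D ∩ R)).card = n - (D ∩ R).card := by
      rw [Finset.card_sdiff_of_subset (Finset.subset_univ _)]
      simp
    have e6 : (Finset.univ \ (D ∪ R)).card = n - (D ∪ R).card := by
      rw [Finset.card_sdiff_of_subset (Finset.subset_univ _)]
      simp
    rw [hLHS, e5, hcardchains, hIsoEq, e6]
    omega
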